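/- A connected simple graph G supports at least one set-valued metric if and only if G is bipartite. -/

import Mathlib

/-- A set-valued metric on a simple graph `G`, valued in a type `Ω`. -/
def IsSetValuedMetric {V Ω : Type*} (G : SimpleGraph V) (f : V → V → Set Ω) : Prop :=
  (∀ x y, f x y = f y x) ∧
  (∀ x y, G.Adj x y → (f x y).ncard = 1) ∧
  (∀ x y z, f x z = symmDiff (f x y) (f y z))

lemma symmDiff_singleton_parity {Ω : Type*} (s : Set Ω) (hs : s.Finite) (a : Ω) :
    (symmDiff s {a}).ncard % 2 ≠ s.ncard % 2 := by
  by_cases h : a ∈ s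
  · have hsd : symmDiff s {a} = s \ {a} := by
      rw [Set.symmDiff_def]
      have h0 : ({a} : Set Ω) \ s = ∅ :=
        Set.diff_eq_empty.mpr (Set.singleton_subset_iff.mpr h)
      simp [h0]
    have h1 : (s \ {a}).ncard = s.ncard - 1 := Set.ncard_diff_singleton_of_mem h
    have h2 : 0 < s.ncard := (Set.ncard_pos hs).mpr ⟨a, h⟩
    rw [hsd, h1]
    omega
  · have hsd : symmDiff s {a} = insert a s := by
      rw [Set.symmDiff_def]
      have h0 : s \ {a} = s := Set.diff_singleton_eq_self h
      rw [h0]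
      ext x; simp [or_comm]
    have h1 : (insert a s).ncard = s.ncard + 1 := Set.ncard_insert_of_notMem h hs
    rw [hsd, h1]
    omega

/-- A connected simple graph supports at least one set-valued metric
iff it is bipartite (i.e. 2-colorable). -/
theorem stmt0 {V : Type*} (G : SimpleGraph V) (hG : G.Connected) :
    (∃ (Ω : Type) (f : V → V → Set Ω), IsSetValuedMetric G f) ↔ G.Colorable 2 := by
  constructor
  · rintro ⟨Ω, f, hsymm, hedge, htri⟩
    have hself : ∀ x, f x x = ∅ := by
      intro x
      have := htri x x x
      simpa [symmDiff_self] using this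
    have hfin : ∀ a b : V, (f a b).Finite := by
      intro a b
      obtain ⟨w⟩ := hG a b
      induction w with
      | nil => simp [hself]
      | cons h p ih =>
        rename_i u x y
        have h1 : (f u x).Finite := by
          obtain ⟨e, he⟩ := Set.ncard_eq_one.mp (hedge u x h)
          simp [he]
        rw [htri u x y, Set.symmDiff_def]
        exact h1.diff.union ih.diff
    obtain ⟨v0⟩ := hG.nonempty
    refine ⟨SimpleGraph.Coloring.mk
      (fun x => (⟨(f v0 x).ncard % 2, by omega⟩ : Fin 2)) ?_⟩
    intro x y hxy
    simp only [ne_eq, Fin.mk.injEq]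
    obtain ⟨a, ha⟩ := Set.ncard_eq_one.mp (hedge x y hxy)
    have h1 : f v0 y = symmDiff (f v0 x) {a} := by rw [htri v0 x y, ha]
    rw [h1]
    exact (symmDiff_singleton_parity _ (hfin v0 x) a).symm
  · rintro ⟨c⟩
    refine ⟨Unit, fun x y => {u : Unit | c x ≠ c y}, ?_, ?_, ?_⟩
    · intro x y; ext u; simp [ne_comm]
    · intro x y hxy
      have hv := c.valid hxy
      show ({u : Unit | c x ≠ c y}).ncard = 1
      have h0 : {u : Unit | c x ≠ c y} = ({()} : Set Unit) := by
        ext u; simp [hv]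
      rw [h0]; simp
    · intro x y z
      show {u : Unit | c x ≠ c z} =
        symmDiff {u : Unit | c x ≠ c y} {u : Unit | c y ≠ c z}
      ext u
      simp only [Set.mem_setOf_eq, Set.mem_symmDiff, ne_eq, Fin.ext_iff]
      have hx := (c x).isLt
      have hy := (c y).isLt
      have hz := (c z).isLt
      omega
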